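/- Let λ = (λ_1,…,λ_m) be a composition of n and b = (λ_1^{λ_1}, (λ_1+λ_2)^{λ_2}, …, n^{λ_m}). Let b′ = (λ_1^{λ_1}, …, (λ_1+⋯+λ_k −1)^{λ_k}, …, (λ_1+⋯+λ_w −1)^{λ_w −1}, …, (n−1)^{λ_m}) be obtained from a position (i,s) with s > b_i lying in block (k,w), k < w. Then the quantum determinant d ∈ A(n−1) lies in the ideal I(b′); equivalently, for every σ ∈ Σ_{n−1} there exists j with c_{j,σ(j)} ∈ I(b′). -/

import Mathlib

noncomputable section
open scoped TensorProduct

variable (k : Type) [Field k]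

/-- The two-parameter quantum matrix relations on the free algebra on generators
`x (i,j)`, `1 ≤ i,j ≤ n` (here indexed by `Fin n`). -/
inductive QRel (n : ℕ) (α β : k) :
    FreeAlgebra k (Fin n × Fin n) → FreeAlgebra k (Fin n × Fin n) → Prop
  | row (i : Fin n) {r s : Fin n} (h : r < s) :
      QRel n α β (FreeAlgebra.ι k (i, s) * FreeAlgebra.ι k (i, r))
        (α • (FreeAlgebra.ι k (i, r) * FreeAlgebra.ι k (i, s)))
  | col {i j : Fin n} (r : Fin n) (h : i < j) :
      QRel n α β (FreeAlgebra.ι k (j, r) * FreeAlgebra.ι k (i, r))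
        (β • (FreeAlgebra.ι k (i, r) * FreeAlgebra.ι k (j, r)))
  | mixed {i j r s : Fin n} (hij : i < j) (hrs : r < s) :
      QRel n α β (FreeAlgebra.ι k (j, r) * FreeAlgebra.ι k (i, s))
        ((α⁻¹ * β) • (FreeAlgebra.ι k (i, s) * FreeAlgebra.ι k (j, r)))
  | diag {i j r s : Fin n} (hij : i < j) (hrs : r < s) :
      QRel n α β (FreeAlgebra.ι k (j, s) * FreeAlgebra.ι k (i, r))
        (FreeAlgebra.ι k (i, r) * FreeAlgebra.ι k (j, s)
          + (β - α⁻¹) • (FreeAlgebra.ι k (i, s) * FreeAlgebra.ι k (j, r)))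

/-- The two-parameter quantum matrix algebra `A_{α,β}(n)`. -/
abbrev QMat (n : ℕ) (α β : k) := RingQuot (QRel k n α β)

/-- The generators `c_{ij}` of `A_{α,β}(n)`. -/
def qc (n : ℕ) (α β : k) (i j : Fin n) : QMat k n α β :=
  RingQuot.mkAlgHom k (QRel k n α β) (FreeAlgebra.ι k (i, j))

/-- The ordered monomial `c^ω = c₁₁^{ω₁₁} c₁₂^{ω₁₂} ⋯ cₙₙ^{ωₙₙ}`,
with factors taken in lexicographic order of the index `(i,j)`. -/
def qMon (n : ℕ) (α β : k) (ω : Fin n → Fin n → ℕ) : QMat k n α β :=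
  ((List.finRange n).map fun i =>
    ((List.finRange n).map fun j => qc k n α β i j ^ ω i j).prod).prod

/-- The relation identifying the generators `c_{is}` with `s > b_i` with `0`
(here in 0-based indexing: `c i s ~ 0` when `b i < s`). -/
def BRel (n : ℕ) (α β : k) (b : Fin n → Fin n) :
    QMat k n α β → QMat k n α β → Prop :=
  fun x y => (∃ i s : Fin n, b i < s ∧ x = qc k n α β i s) ∧ y = 0

/-- The quotient algebra `A(b) = A_{α,β}(n)/I(b)`. -/
abbrev QB (n : ℕ) (α β : k) (b : Fin n → Fin n) := RingQuot (BRel k n α β b)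

/-- The canonical projection `A(n) → A(b)`. -/
def qbProj (n : ℕ) (α β : k) (b : Fin n → Fin n) : QMat k n α β →ₐ[k] QB k n α β b :=
  RingQuot.mkAlgHom k (BRel k n α β b)

/-- The number of inversions (Coxeter length) of a permutation. -/
def invCount {n : ℕ} (σ : Equiv.Perm (Fin n)) : ℕ :=
  (Finset.univ.filter fun p : Fin n × Fin n => p.1 < p.2 ∧ σ p.2 < σ p.1).card

/-- The two-parameter quantum determinant
`d = Σ_σ (−α)^{−ℓ(σ)} c_{1,σ(1)} ⋯ c_{n,σ(n)}`. -/
def qdet (n : ℕ) (α β : k) : QMat k n α β :=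
  ∑ σ : Equiv.Perm (Fin n),
    ((-α)⁻¹ ^ invCount σ) • ((List.finRange n).map fun i => qc k n α β i (σ i)).prod

/-- Concatenation of constant blocks: given block sizes and block values, produce
the sequence consisting of each value repeated the corresponding number of times. -/
def concatRep (sizes vals : List ℕ) : List ℕ :=
  (List.zipWith List.replicate sizes vals).flatten

/-- The relation identifying the generators `c_{jt}` with `t > b_j` with `0`, for a
1-based sequence of bounds given by a list of natural numbers. -/
def BRelNat (m : ℕ) (α β : k) (bl : List ℕ) :
    QMat k m α β → QMat k m α β → Prop :=
  fun x y => (∃ j t : Fin m, bl.getD j 0 < (t : ℕ) + 1 ∧ x = qc k m α β j t) ∧ y = 0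

/-- Let `λ = (λ_1,…,λ_m)` be a composition of `n`, `b` the associated block sequence,
and `b′` (of length `n−1`) obtained from a position in block `(k,w)`, `k < w`: block
sizes are those of `λ` with `λ_w` decreased by `1`, and block values are the partial
sums `λ_1+⋯+λ_r`, decreased by `1` for `r ≥ k`. Then the quantum determinant
`d ∈ A(n−1)` lies in `I(b′)` (its image in `A(n−1)/I(b′)` is zero); equivalently, for
every permutation `σ` of `{1,…,n−1}` there exists `j` with `σ(j) > b′_j`, i.e.
`c_{j,σ(j)} ∈ I(b′)`. -/

theorem concatRep_length_aux : ∀ (sizes vals : List ℕ), sizes.length ≤ vals.length →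
    ((List.zipWith List.replicate sizes vals).flatten).length = sizes.sum
  | [], _, _ => by simp
  | s :: ss, [], h => by simp at h
  | s :: ss, v :: vs, h => by
    simp only [List.zipWith_cons_cons, List.flatten_cons, List.length_append,
      List.length_replicate, List.sum_cons]
    rw [concatRep_length_aux ss vs (by simpa using h)]

theorem concatRep_mem_aux : ∀ (sizes vals : List ℕ) (a : ℕ),
    a ∈ (List.zipWith List.replicate sizes vals).flatten → a ∈ vals
  | [], _, a => by simp
  | s :: ss, [], a => by simp
  | s :: ss, v :: vs, a => by
    simp only [List.zipWith_cons_cons, List.flatten_cons, List.mem_append, List.mem_cons]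
    rintro (h | h)
    · exact Or.inl (List.eq_of_mem_replicate h)
    · exact Or.inr (concatRep_mem_aux ss vs a h)

theorem qdet_mem_parabolic_ideal (α β : k) (hα : α ≠ 0) (hβ : β ≠ 0)
    (lam : List ℕ) (hpos : ∀ a ∈ lam, 0 < a)
    (kIdx w : ℕ) (hkw : kIdx < w) (hw : w < lam.length)
    (m : ℕ) (hm : m + 1 = lam.sum)
    (b' : List ℕ)
    (hb' : b' = concatRep
      (lam.set w (lam.getD w 0 - 1))
      ((List.range lam.length).map fun r =>
        (lam.take (r + 1)).sum - (if kIdx ≤ r then 1 else 0))) :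
    (∀ σ : Equiv.Perm (Fin m), ∃ j : Fin m, b'.getD j 0 < (σ j : ℕ) + 1) ∧
    RingQuot.mkAlgHom k (BRelNat k m α β b') (qdet k m α β) = 0 := by
  -- notation
  set u := kIdx + 1 with hu
  set T := (lam.take u).sum with hT
  have hul : u ≤ lam.length := by omega
  have huw : u ≤ w := hkw
  set valf : ℕ → ℕ := fun r => (lam.take (r + 1)).sum - (if kIdx ≤ r then 1 else 0) with hvalf
  set sizes : List ℕ := lam.set w (lam.getD w 0 - 1) with hsizes
  set vals : List ℕ := (List.range lam.length).map valf with hvals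
  have hslen : sizes.length = lam.length := by simp [hsizes]
  have hvlen : vals.length = lam.length := by simp [hvals]
  -- sizes.take u = lam.take u
  have htakeset : sizes.take u = lam.take u := by
    rw [hsizes, List.set_eq_take_append_cons_drop, if_pos hw,
      List.take_append_of_le_length (by simp [Nat.le_of_lt hw]; omega), List.take_take,
      Nat.min_eq_left huw]
  -- positivity of T
  have hT1 : 0 < T := by
    rw [hT]
    apply List.sum_pos
    · intro x hx; exact hpos x (List.mem_of_mem_take hx)
    · have hlt : (lam.take u).length = u := by simp; omega
      intro hnil; rw [hnil] at hlt; simp at hlt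
  -- T ≤ m
  have hTm : T ≤ m := by
    have h1 : List.Sublist (lam.take u) (lam.take w) := by
      rw [show lam.take u = (lam.take w).take u by rw [List.take_take, Nat.min_eq_left huw]]
      exact List.take_sublist _ _
    have h2 : T ≤ (lam.take w).sum := h1.sum_le_sum (fun a _ => Nat.zero_le a)
    have h3 : (lam.take (w + 1)).sum = (lam.take w).sum + lam[w] := List.sum_take_succ _ _ hw
    have h4 : (lam.take (w + 1)).sum ≤ lam.sum :=
      (List.take_sublist _ _).sum_le_sum (fun a _ => Nat.zero_le a)
    have h5 : 0 < lam[w] := hpos _ (lam.getElem_mem hw)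
    omega
  -- the key bound on prefix entries of b'
  have hkey : ∀ j : ℕ, j < T → b'.getD j 0 < T := by
    intro j hj
    have hlen1 : (sizes.take u).length = (vals.take u).length := by
      simp [hslen, hvlen]
    have hsplit : b' = (List.zipWith List.replicate (sizes.take u) (vals.take u)).flatten ++
        (List.zipWith List.replicate (sizes.drop u) (vals.drop u)).flatten := by
      rw [hb']
      unfold concatRep
      conv_lhs => rw [show sizes = sizes.take u ++ sizes.drop u from
          (List.take_append_drop u sizes).symm,
        show vals = vals.take u ++ vals.drop u from (List.take_append_drop u vals).symm]
      rw [List.zipWith_append hlen1, List.flatten_append]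
    set A := (List.zipWith List.replicate (sizes.take u) (vals.take u)).flatten with hA
    have hAlen : A.length = T := by
      rw [hA, concatRep_length_aux _ _ (le_of_eq hlen1), htakeset, hT]
    have hjA : j < A.length := by omega
    rw [hsplit, List.getD_append _ _ _ _ hjA, List.getD_eq_getElem _ _ hjA]
    have hmem : A[j] ∈ vals.take u := concatRep_mem_aux _ _ _ (A.getElem_mem hjA)
    have hvtake : vals.take u = (List.range u).map valf := by
      rw [hvals, ← List.map_take, List.take_range, Nat.min_eq_left hul]
    rw [hvtake] at hmem
    obtain ⟨r, hr, hrv⟩ := List.mem_map.mp hmem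
    rw [List.mem_range] at hr
    rw [← hrv, hvalf]
    simp only
    have hTe : T = (lam.take (kIdx + 1)).sum := rfl
    rcases Nat.lt_or_ge r kIdx with hcase | hcase
    · rw [if_neg (by omega)]
      have h1 : List.Sublist (lam.take (r + 1)) (lam.take kIdx) := by
        rw [show lam.take (r+1) = (lam.take kIdx).take (r+1) by
          rw [List.take_take, Nat.min_eq_left (by omega)]]
        exact List.take_sublist _ _
      have h2 := h1.sum_le_sum (fun a _ => Nat.zero_le a)
      have h3 : (lam.take (kIdx + 1)).sum = (lam.take kIdx).sum + lam[kIdx] :=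
        List.sum_take_succ _ _ (by omega)
      have h5 : 0 < lam[kIdx] := hpos _ (lam.getElem_mem (by omega))
      omega
    · have hreq : r = kIdx := by omega
      subst hreq
      rw [if_pos le_rfl]
      omega
  -- part one
  have part1 : ∀ σ : Equiv.Perm (Fin m), ∃ j : Fin m, b'.getD j 0 < (σ j : ℕ) + 1 := by
    intro σ
    by_contra hcon
    push_neg at hcon
    have hf : ∀ i : Fin T, (σ ⟨(i : ℕ), lt_of_lt_of_le i.2 hTm⟩ : ℕ) < T - 1 := by
      intro i
      have h1 : (σ ⟨(i : ℕ), lt_of_lt_of_le i.2 hTm⟩ : ℕ) + 1 ≤ b'.getD ((i : ℕ)) 0 :=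
        hcon ⟨(i : ℕ), lt_of_lt_of_le i.2 hTm⟩
      have h2 := hkey (i : ℕ) i.2
      omega
    have hinj : Function.Injective (fun i : Fin T =>
        (⟨(σ ⟨(i : ℕ), lt_of_lt_of_le i.2 hTm⟩ : ℕ), hf i⟩ : Fin (T - 1))) := by
      intro i i' h
      simp only [Fin.mk.injEq] at h
      have h2 := σ.injective (Fin.ext h)
      exact Fin.ext (by simpa using congrArg Fin.val h2)
    have hcard := Fintype.card_le_of_injective _ hinj
    simp only [Fintype.card_fin] at hcard
    omega
  refine ⟨part1, ?_⟩
  -- part two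
  have hzero : ∀ σ : Equiv.Perm (Fin m),
      RingQuot.mkAlgHom k (BRelNat k m α β b')
        (((List.finRange m).map fun i => qc k m α β i (σ i)).prod) = 0 := by
    intro σ
    obtain ⟨j, hj⟩ := part1 σ
    rw [map_list_prod]
    apply List.prod_eq_zero
    rw [List.map_map]
    refine List.mem_map.mpr ⟨j, List.mem_finRange j, ?_⟩
    have hrel : BRelNat k m α β b' (qc k m α β j (σ j)) 0 := ⟨⟨j, σ j, hj, rfl⟩, rfl⟩
    have h3 := RingQuot.mkAlgHom_rel k hrel
    simpa using h3
  rw [qdet, map_sum]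
  refine Finset.sum_eq_zero fun σ _ => ?_
  rw [map_smul, hzero σ, smul_zero]
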